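/- Let f ∈ C¹(ℝ^n, ℝ^m) with ‖f‖_{C¹} = 1, and let μ be an ℝ^m-valued Borel measure on ℝ^n of finite total variation with μ(ℝ^n) = 0 and finite first moments. Then μ ∈ 𝒫_f (that is, J(μ) = ∫⟨f, dμ⟩) if and only if for every map h ∈ C¹(ℝ^n, ℝ^m) such that the Lipschitz constants λ_ε of f − εh satisfy liminf_{ε→0⁺} (1 − λ_ε)/ε ≥ 0, one has ∫⟨h, dμ⟩ ≥ 0. -/

import Mathlib

open Matrix MeasureTheory Filter
open scoped RealInnerProductSpace Topology

noncomputable section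

/-- Real power of a square real matrix via spectral decomposition (junk value `0`
for non-Hermitian matrices). -/
def matPow {n : ℕ} (A : Matrix (Fin n) (Fin n) ℝ) (r : ℝ) : Matrix (Fin n) (Fin n) ℝ :=
  if hA : A.IsHermitian then
    (hA.eigenvectorUnitary : Matrix (Fin n) (Fin n) ℝ) *
      Matrix.diagonal (fun i => (hA.eigenvalues i) ^ r) *
      (star hA.eigenvectorUnitary : Matrix.unitaryGroup (Fin n) ℝ)
  else 0

/-- Absolute value `|A| = (A^* A)^{1/2}` of a real rectangular matrix. -/
def matAbs {m n : ℕ} (A : Matrix (Fin m) (Fin n) ℝ) : Matrix (Fin n) (Fin n) ℝ :=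
  matPow (Aᴴ * A) (1/2)

/-- Euclidean space ℝⁿ. -/
abbrev Euc (n : ℕ) := EuclideanSpace ℝ (Fin n)

/-- Frobenius (trace) pairing ⟨A, B⟩ = tr(AB^*) of two m×n matrices. -/
def frob {m n : ℕ} (A B : Matrix (Fin m) (Fin n) ℝ) : ℝ := Matrix.trace (A * Bᴴ)

/-- The matrix of the Fréchet derivative of f : ℝⁿ → ℝᵐ at x. -/
def fderivMat {n m : ℕ} (f : Euc n → Euc m) (x : Euc n) : Matrix (Fin m) (Fin n) ℝ :=
  Matrix.of fun i j => fderiv ℝ f x (EuclideanSpace.single j 1) i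

/-- f ∈ C¹(ℝⁿ, ℝᵐ): continuously differentiable with bounded derivative. -/
def C1b {n m : ℕ} (f : Euc n → Euc m) : Prop :=
  ContDiff ℝ 1 f ∧ ∃ C : ℝ, ∀ x, ‖fderiv ℝ f x‖ ≤ C

/-- f ∈ C¹₀(ℝⁿ, ℝᵐ): continuously differentiable with derivative vanishing at
infinity. -/
def C1z {n m : ℕ} (f : Euc n → Euc m) : Prop :=
  ContDiff ℝ 1 f ∧ Tendsto (fun x => ‖fderiv ℝ f x‖) (cocompact (Euc n)) (nhds 0)

/-- The C¹ seminorm ‖f‖_{C¹} = sup_x ‖Df(x)‖ (operator norm). -/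
def C1Norm {n m : ℕ} (f : Euc n → Euc m) : ℝ := ⨆ x, ‖fderiv ℝ f x‖

/-- An ℝᵐ-valued Borel measure μ on ℝⁿ of finite total variation, encoded by its
total variation measure `var = ‖μ‖` together with its polar (Radon–Nikodym)
density `density = dμ/d‖μ‖`, a vector field of norm one ‖μ‖-a.e.; thus
μ(E) = ∫_E density d‖μ‖. -/
structure VecMeas (n m : ℕ) where
  var : Measure (Euc n)
  density : Euc n → Euc m
  finite : IsFiniteMeasure var
  measurable_density : Measurable density
  norm_density : ∀ᵐ x ∂var, ‖density x‖ = 1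

/-- The pairing ∫ ⟨f, dμ⟩. -/
def VecMeas.pair {n m : ℕ} (μ : VecMeas n m) (f : Euc n → Euc m) : ℝ :=
  ∫ x, ⟪f x, μ.density x⟫ ∂μ.var

/-- μ(ℝⁿ) = 0. -/
def VecMeas.totalZero {n m : ℕ} (μ : VecMeas n m) : Prop :=
  ∫ x, μ.density x ∂μ.var = 0

/-- Finite first moments: ∫ ‖x‖ d‖μ‖(x) < ∞. -/
def VecMeas.finiteFirstMoment {n m : ℕ} (μ : VecMeas n m) : Prop :=
  Integrable (fun x => ‖x‖) μ.var

/-- An ℝ^{m×n}-valued Borel measure M on ℝⁿ of finite total variation with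
respect to the Schatten 1-norm, encoded by its total variation measure
`var = ‖M‖₁` together with its Radon–Nikodym density `density = dM/d‖M‖₁`,
a matrix field of Schatten 1-norm one ‖M‖₁-a.e. -/
structure MatMeas (n m : ℕ) where
  var : Measure (Euc n)
  density : Euc n → Matrix (Fin m) (Fin n) ℝ
  finite : IsFiniteMeasure var
  measurable_density : ∀ i j, Measurable fun x => density x i j
  norm_density : ∀ᵐ x ∂var, Matrix.trace (matAbs (density x)) = 1

/-- The total variation norm ‖M‖_𝓜 = ‖M‖₁(ℝⁿ). -/
def MatMeas.tvNorm {n m : ℕ} (M : MatMeas n m) : ℝ := (M.var Set.univ).toReal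

/-- The pairing ∫ ⟨G, dM⟩ of a matrix field G against M. -/
def MatMeas.pair {n m : ℕ} (M : MatMeas n m) (G : Euc n → Matrix (Fin m) (Fin n) ℝ) : ℝ :=
  ∫ x, frob (G x) (M.density x) ∂M.var

/-- −div M = μ: for all f ∈ C¹₀(ℝⁿ, ℝᵐ), ∫⟨f, dμ⟩ = ∫⟨Df, dM⟩. -/
def IsNegDiv {n m : ℕ} (M : MatMeas n m) (μ : VecMeas n m) : Prop :=
  ∀ f : Euc n → Euc m, C1z f → μ.pair f = M.pair (fderivMat f)

/-- J(μ) = sup { ∫⟨u, dμ⟩ : u ∈ C¹(ℝⁿ,ℝᵐ), ‖u‖_{C¹} ≤ 1 }. -/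
def Jsup {n m : ℕ} (μ : VecMeas n m) : ℝ :=
  sSup {r | ∃ f : Euc n → Euc m, C1b f ∧ C1Norm f ≤ 1 ∧ r = μ.pair f}

/-- I(μ) = inf { ‖M‖_𝓜 : −div M = μ }. -/
def Iinf {n m : ℕ} (μ : VecMeas n m) : ℝ :=
  sInf {r | ∃ M : MatMeas n m, IsNegDiv M μ ∧ r = M.tvNorm}


section AuxLemmas
variable {n m : ℕ}

lemma C1b.diffble {g : Euc n → Euc m} (hg : C1b g) : Differentiable ℝ g :=
  hg.1.differentiable one_ne_zero

lemma bddAbove_nf {g : Euc n → Euc m} (hg : C1b g) :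
    BddAbove (Set.range fun x => ‖fderiv ℝ g x‖) := by
  obtain ⟨C, hC⟩ := hg.2
  exact ⟨C, by rintro _ ⟨x, rfl⟩; exact hC x⟩

lemma norm_fderiv_le_C1Norm {g : Euc n → Euc m} (hg : C1b g) (x : Euc n) :
    ‖fderiv ℝ g x‖ ≤ C1Norm g :=
  le_ciSup (bddAbove_nf hg) x

lemma C1Norm_nonneg (g : Euc n → Euc m) : 0 ≤ C1Norm g :=
  Real.iSup_nonneg fun _ => norm_nonneg _

lemma C1Norm_le {g : Euc n → Euc m} {C : ℝ} (h : ∀ x, ‖fderiv ℝ g x‖ ≤ C) :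
    C1Norm g ≤ C :=
  ciSup_le h

lemma C1b.lip {g : Euc n → Euc m} (hg : C1b g) (x y : Euc n) :
    ‖g x - g y‖ ≤ C1Norm g * ‖x - y‖ :=
  Convex.norm_image_sub_le_of_norm_fderiv_le
    (fun z _ => hg.diffble z)
    (fun z _ => norm_fderiv_le_C1Norm hg z) convex_univ trivial trivial

lemma fderivSub {g h : Euc n → Euc m} (hg : C1b g) (hh : C1b h) (x : Euc n) :
    fderiv ℝ (fun y => g y - h y) x = fderiv ℝ g x - fderiv ℝ h x :=
  fderiv_sub (hg.diffble x) (hh.diffble x)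

lemma fderiv_csmul {h : Euc n → Euc m} (hh : C1b h) (c : ℝ) (x : Euc n) :
    fderiv ℝ (fun y => c • h y) x = c • fderiv ℝ h x :=
  fderiv_const_smul (hh.diffble x) c

lemma C1b.csmul {h : Euc n → Euc m} (hh : C1b h) (c : ℝ) : C1b (fun y => c • h y) := by
  obtain ⟨C, hC⟩ := hh.2
  refine ⟨hh.1.const_smul c, ⟨|c| * C, fun x => ?_⟩⟩
  rw [fderiv_csmul hh c x]
  calc ‖c • fderiv ℝ h x‖ = |c| * ‖fderiv ℝ h x‖ := by
        simpa using norm_smul c (fderiv ℝ h x)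
    _ ≤ |c| * C := mul_le_mul_of_nonneg_left (hC x) (abs_nonneg c)

lemma C1b.sub' {g h : Euc n → Euc m} (hg : C1b g) (hh : C1b h) :
    C1b (fun y => g y - h y) := by
  obtain ⟨C, hC⟩ := hg.2; obtain ⟨D, hD⟩ := hh.2
  refine ⟨hg.1.sub hh.1, ⟨C + D, fun x => ?_⟩⟩
  rw [fderivSub hg hh x]
  exact (norm_sub_le _ _).trans (add_le_add (hC x) (hD x))

lemma C1b.const (c : Euc m) : C1b (fun _ : Euc n => c) := by
  refine ⟨contDiff_const, ⟨0, fun x => ?_⟩⟩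
  simp [fderiv_const]

lemma integrable_density (μ : VecMeas n m) : Integrable μ.density μ.var := by
  haveI := μ.finite
  refine Integrable.mono' (integrable_const 1) μ.measurable_density.aestronglyMeasurable ?_
  filter_upwards [μ.norm_density] with x hx
  rw [hx]

lemma integrable_inner_pair (μ : VecMeas n m) (hmom : μ.finiteFirstMoment)
    {g : Euc n → Euc m} (hg : C1b g) :
    Integrable (fun x => ⟪g x, μ.density x⟫) μ.var := by
  haveI := μ.finite
  have hmeas : AEStronglyMeasurable (fun x => ⟪g x, μ.density x⟫) μ.var :=
    (Measurable.inner (hg.1.continuous.measurable) μ.measurable_density).aestronglyMeasurable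
  refine Integrable.mono' ((integrable_const ‖g 0‖).add (hmom.const_mul (C1Norm g))) hmeas ?_
  filter_upwards [μ.norm_density] with x hx
  calc ‖⟪g x, μ.density x⟫‖ ≤ ‖g x‖ * ‖μ.density x‖ := norm_inner_le_norm _ _
    _ = ‖g x‖ := by rw [hx, mul_one]
    _ ≤ ‖g 0‖ + C1Norm g * ‖x‖ := by
        have h1 := hg.lip x 0
        have h2 : ‖g x‖ ≤ ‖g 0‖ + ‖g x - g 0‖ := by
          have := norm_add_le (g 0) (g x - g 0); simpa using this
        simpa using h2.trans (by simpa using add_le_add_left h1 ‖g 0‖)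

lemma pair_csmul (μ : VecMeas n m) {g : Euc n → Euc m} (c : ℝ) :
    μ.pair (fun x => c • g x) = c * μ.pair g := by
  unfold VecMeas.pair
  rw [← integral_const_mul]
  congr 1; ext x; rw [real_inner_smul_left]

lemma pair_sub (μ : VecMeas n m) (hmom : μ.finiteFirstMoment)
    {g h : Euc n → Euc m} (hg : C1b g) (hh : C1b h) :
    μ.pair (fun x => g x - h x) = μ.pair g - μ.pair h := by
  unfold VecMeas.pair
  rw [← integral_sub (integrable_inner_pair μ hmom hg) (integrable_inner_pair μ hmom hh)]
  congr 1; ext x; rw [inner_sub_left]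

lemma pair_le_moment (μ : VecMeas n m) (hzero : μ.totalZero) (hmom : μ.finiteFirstMoment)
    {g : Euc n → Euc m} (hg : C1b g) (hg1 : C1Norm g ≤ 1) :
    μ.pair g ≤ ∫ x, ‖x‖ ∂μ.var := by
  haveI := μ.finite
  have hconst : μ.pair (fun _ => g 0) = 0 := by
    unfold VecMeas.pair
    rw [integral_inner (integrable_density μ) (g 0), hzero, inner_zero_right]
  have key : μ.pair g = μ.pair (fun x => g x - g 0) := by
    rw [pair_sub μ hmom hg (C1b.const (g 0)), hconst, sub_zero]
  rw [key]
  unfold VecMeas.pair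
  refine integral_mono_ae (integrable_inner_pair μ hmom (hg.sub' (C1b.const (g 0)))) hmom ?_
  filter_upwards [μ.norm_density] with x hx
  calc ⟪g x - g 0, μ.density x⟫ ≤ ‖g x - g 0‖ * ‖μ.density x‖ := real_inner_le_norm _ _
    _ = ‖g x - g 0‖ := by rw [hx, mul_one]
    _ ≤ C1Norm g * ‖x - 0‖ := hg.lip x 0
    _ ≤ ‖x‖ := by
        rw [sub_zero]
        nlinarith [norm_nonneg x, C1Norm_nonneg g]

end AuxLemmas

set_option maxHeartbeats 2000000

/-- **Proposition 6.2**: let f ∈ C¹(ℝⁿ, ℝᵐ) with ‖f‖_{C¹} = 1 and let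
μ ∈ 𝓜(ℝⁿ, ℝᵐ) have μ(ℝⁿ) = 0 and finite first moments.  Then μ ∈ 𝒫_f, i.e.
J(μ) = ∫⟨f, dμ⟩, iff for every h ∈ C¹(ℝⁿ, ℝᵐ) whose Lipschitz constants
λ_ε = ‖f − εh‖_{C¹} satisfy liminf_{ε→0⁺} (1 − λ_ε)/ε ≥ 0 one has
∫⟨h, dμ⟩ ≥ 0. -/
theorem mem_polarCone_C1_iff {n m : ℕ} (f : Euc n → Euc m)
    (hf : C1b f) (hf1 : C1Norm f = 1)
    (μ : VecMeas n m) (hzero : μ.totalZero) (hmom : μ.finiteFirstMoment) :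
    Jsup μ = μ.pair f ↔
      ∀ h : Euc n → Euc m, C1b h →
        (0 : ℝ) ≤ liminf (fun ε : ℝ => (1 - C1Norm (fun x => f x - ε • h x)) / ε)
            (nhdsWithin 0 (Set.Ioi 0)) →
        0 ≤ μ.pair h := by
  classical
  set S : Set ℝ := {r | ∃ g : Euc n → Euc m, C1b g ∧ C1Norm g ≤ 1 ∧ r = μ.pair g} with hS
  have hJdef : Jsup μ = sSup S := rfl
  have hbdd : BddAbove S := by
    refine ⟨∫ x, ‖x‖ ∂μ.var, ?_⟩
    rintro r ⟨g, hg, hg1, rfl⟩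
    exact pair_le_moment μ hzero hmom hg hg1
  have hfS : μ.pair f ∈ S := ⟨f, hf, hf1.le, rfl⟩
  have h0S : (0 : ℝ) ∈ S := by
    refine ⟨fun _ => 0, C1b.const 0, ?_, ?_⟩
    · exact C1Norm_le fun x => by simp [fderiv_const]
    · simp [VecMeas.pair]
  constructor
  · intro hJ h hh hlim
    obtain ⟨Ch0, hCh0⟩ := hh.2
    set Ch : ℝ := max Ch0 0 with hChdef
    have hCh : ∀ x, ‖fderiv ℝ h x‖ ≤ Ch := fun x => (hCh0 x).trans (le_max_left _ _)
    have hChnn : 0 ≤ Ch := le_max_right _ _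
    set c := μ.pair f with hcdef
    have hc0 : 0 ≤ c := by
      rw [← hJ, hJdef]; exact le_csSup hbdd h0S
    set ε₀ : ℝ := 1 / (2 * (Ch + 1)) with hε₀def
    have hε₀pos : 0 < ε₀ := by positivity
    have hdk : ∀ ε : ℝ, ∀ x : Euc n,
        fderiv ℝ (fun y => f y - ε • h y) x = fderiv ℝ f x - ε • fderiv ℝ h x := by
      intro ε x
      rw [fderivSub hf (hh.csmul ε) x, fderiv_csmul hh ε x]
    have key : ∀ ε : ℝ, ε ∈ Set.Ioo 0 ε₀ →
        (1 - C1Norm (fun x => f x - ε • h x)) / ε * c ≤ μ.pair h := by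
      intro ε hε
      have hk : C1b (fun y => f y - ε • h y) := hf.sub' (hh.csmul ε)
      set lam := C1Norm (fun y => f y - ε • h y) with hlamdef
      have hlam_ge : 1 - ε * Ch ≤ lam := by
        have hle : C1Norm f ≤ lam + ε * Ch := by
          refine C1Norm_le fun x => ?_
          have e1 : fderiv ℝ f x
              = fderiv ℝ (fun y => f y - ε • h y) x + ε • fderiv ℝ h x := by
            rw [hdk ε x]; abel
          rw [e1]
          have h1 := norm_fderiv_le_C1Norm hk x
          have h2 : ‖ε • fderiv ℝ h x‖ ≤ ε * Ch := by
            have : ‖ε • fderiv ℝ h x‖ = |ε| * ‖fderiv ℝ h x‖ := by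
              simpa using norm_smul ε (fderiv ℝ h x)
            rw [this, abs_of_pos hε.1]
            exact mul_le_mul_of_nonneg_left (hCh x) hε.1.le
          exact (norm_add_le _ _).trans (add_le_add h1 h2)
        rw [hf1] at hle; linarith
      have hεCh : ε * Ch < 1 / 2 := by
        have h2 : ε * (2 * (Ch + 1)) < 1 := by
          have h3 := hε.2
          rw [hε₀def, lt_div_iff₀ (by positivity : (0:ℝ) < 2 * (Ch + 1))] at h3
          exact h3
        nlinarith [hε.1, hChnn]
      have hlampos : 0 < lam := by linarith
      have hkpair : μ.pair (fun y => f y - ε • h y) = c - ε * μ.pair h := by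
        rw [pair_sub μ hmom hf (hh.csmul ε), pair_csmul μ ε]
      have hgS : lam⁻¹ * μ.pair (fun y => f y - ε • h y) ∈ S := by
        refine ⟨fun x => lam⁻¹ • (f x - ε • h x), hk.csmul lam⁻¹, ?_,
          (pair_csmul μ lam⁻¹).symm⟩
        refine C1Norm_le fun x => ?_
        rw [fderiv_csmul hk lam⁻¹ x]
        have e2 : ‖lam⁻¹ • fderiv ℝ (fun y => f y - ε • h y) x‖
            = |lam|⁻¹ * ‖fderiv ℝ (fun y => f y - ε • h y) x‖ := by
          simpa using norm_smul lam⁻¹ (fderiv ℝ (fun y => f y - ε • h y) x)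
        rw [e2, abs_of_pos hlampos]
        calc lam⁻¹ * ‖fderiv ℝ (fun y => f y - ε • h y) x‖
            ≤ lam⁻¹ * lam :=
              mul_le_mul_of_nonneg_left (norm_fderiv_le_C1Norm hk x)
                (inv_pos.2 hlampos).le
          _ = 1 := inv_mul_cancel₀ hlampos.ne'
      have hle2 : lam⁻¹ * μ.pair (fun y => f y - ε • h y) ≤ c := by
        rw [← hJ, hJdef]; exact le_csSup hbdd hgS
      rw [hkpair] at hle2
      have h1 : c - ε * μ.pair h ≤ lam * c := by
        have h2 := mul_le_mul_of_nonneg_left hle2 hlampos.le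
        rw [← mul_assoc, mul_inv_cancel₀ hlampos.ne', one_mul] at h2
        exact h2
      rw [div_mul_eq_mul_div, div_le_iff₀ hε.1]
      linarith
    rcases eq_or_lt_of_le hc0 with hceq | hcpos
    · have h1 := key (ε₀ / 2) ⟨half_pos hε₀pos, half_lt_self hε₀pos⟩
      rw [← hceq, mul_zero] at h1
      exact h1
    · set u := fun ε : ℝ => (1 - C1Norm (fun x => f x - ε • h x)) / ε with hudef
      have hub : ∀ a ∈ {a : ℝ | ∀ᶠ ε in 𝓝[>] (0:ℝ), a ≤ u ε}, a ≤ μ.pair h / c := by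
        intro a ha
        have hev : ∀ᶠ ε in 𝓝[>] (0:ℝ), u ε ≤ μ.pair h / c := by
          filter_upwards [Ioo_mem_nhdsGT_of_mem
            (Set.mem_Ico.2 ⟨le_refl (0:ℝ), hε₀pos⟩)] with ε hε
          rw [le_div_iff₀ hcpos]
          exact key ε hε
        have ha' : ∀ᶠ ε in 𝓝[>] (0:ℝ), a ≤ u ε := ha
        obtain ⟨ε, h1, h2⟩ := (ha'.and hev).exists
        exact h1.trans h2
      have hne : (-Ch) ∈ {a : ℝ | ∀ᶠ ε in 𝓝[>] (0:ℝ), a ≤ u ε} := by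
        have : ∀ᶠ ε in 𝓝[>] (0:ℝ), -Ch ≤ u ε := by
          filter_upwards [self_mem_nhdsWithin] with ε hε
          have hεpos : (0:ℝ) < ε := hε
          have hup : C1Norm (fun x => f x - ε • h x) ≤ 1 + ε * Ch := by
            refine C1Norm_le fun x => ?_
            rw [hdk ε x]
            have h1 := (norm_fderiv_le_C1Norm hf x).trans hf1.le
            have h2 : ‖ε • fderiv ℝ h x‖ ≤ ε * Ch := by
              have e : ‖ε • fderiv ℝ h x‖ = |ε| * ‖fderiv ℝ h x‖ := by
                simpa using norm_smul ε (fderiv ℝ h x)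
              rw [e, abs_of_pos hεpos]
              exact mul_le_mul_of_nonneg_left (hCh x) hεpos.le
            exact (norm_sub_le _ _).trans (add_le_add h1 h2)
          rw [hudef]
          rw [le_div_iff₀ hεpos]
          nlinarith
        exact this
      have hLle : liminf u (𝓝[>] (0:ℝ)) ≤ μ.pair h / c := by
        rw [Filter.liminf_eq]
        exact csSup_le ⟨-Ch, hne⟩ hub
      have h0 : 0 ≤ μ.pair h / c := le_trans hlim hLle
      calc (0:ℝ) ≤ μ.pair h / c * c := mul_nonneg h0 hcpos.le
        _ = μ.pair h := div_mul_cancel₀ _ hcpos.ne'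
  · intro H
    have hub : ∀ r ∈ S, r ≤ μ.pair f := by
      rintro r ⟨g, hg, hg1, rfl⟩
      have hfg : C1b (fun x => f x - g x) := hf.sub' hg
      have hlim : (0:ℝ) ≤ liminf
          (fun ε : ℝ => (1 - C1Norm (fun x => f x - ε • (f x - g x))) / ε)
          (𝓝[>] (0:ℝ)) := by
        rw [Filter.liminf_eq]
        apply Real.sSup_nonneg'
        refine ⟨0, ?_, le_refl 0⟩
        show ∀ᶠ ε in 𝓝[>] (0:ℝ), (0:ℝ) ≤ _
        filter_upwards [Ioo_mem_nhdsGT_of_mem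
          (Set.mem_Ico.2 ⟨le_refl (0:ℝ), one_pos⟩)] with ε hε
        have hC : C1Norm (fun x => f x - ε • (f x - g x)) ≤ 1 := by
          refine C1Norm_le fun x => ?_
          have e1 : fderiv ℝ (fun x => f x - ε • (f x - g x)) x
              = fderiv ℝ f x - ε • (fderiv ℝ f x - fderiv ℝ g x) := by
            rw [fderivSub hf (hfg.csmul ε) x, fderiv_csmul hfg ε x, fderivSub hf hg x]
          have e2 : fderiv ℝ f x - ε • (fderiv ℝ f x - fderiv ℝ g x)
              = (1 - ε) • fderiv ℝ f x + ε • fderiv ℝ g x := by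
            module
          rw [e1, e2]
          have hnf := (norm_fderiv_le_C1Norm hf x).trans hf1.le
          have hng := (norm_fderiv_le_C1Norm hg x).trans hg1
          have h1 : ‖(1 - ε) • fderiv ℝ f x‖ ≤ (1 - ε) := by
            have e : ‖(1 - ε) • fderiv ℝ f x‖ = |1 - ε| * ‖fderiv ℝ f x‖ := by
              simpa using norm_smul (1 - ε) (fderiv ℝ f x)
            rw [e, abs_of_nonneg (by linarith [hε.2] : (0:ℝ) ≤ 1 - ε)]
            nlinarith [norm_nonneg (fderiv ℝ f x), hε.2]
          have h2 : ‖ε • fderiv ℝ g x‖ ≤ ε := by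
            have e : ‖ε • fderiv ℝ g x‖ = |ε| * ‖fderiv ℝ g x‖ := by
              simpa using norm_smul ε (fderiv ℝ g x)
            rw [e, abs_of_pos hε.1]
            nlinarith [norm_nonneg (fderiv ℝ g x), hε.1]
          calc ‖(1 - ε) • fderiv ℝ f x + ε • fderiv ℝ g x‖
              ≤ ‖(1 - ε) • fderiv ℝ f x‖ + ‖ε • fderiv ℝ g x‖ := norm_add_le _ _
            _ ≤ (1 - ε) + ε := add_le_add h1 h2
            _ = 1 := by ring
        exact div_nonneg (by linarith) hε.1.le
      have h1 := H _ hfg hlim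
      rw [pair_sub μ hmom hf hg] at h1
      linarith
    rw [hJdef]
    exact le_antisymm (csSup_le ⟨_, hfS⟩ hub) (le_csSup hbdd hfS)
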